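/- Let F be a formula provable in CL5⁻ with n positive occurrences of atoms. Then no CL5⁻ proof of F contains a cirquent with more than n ogroups. -/
import Mathlib


namespace CirquentCalc

/-- Formulas: literals (negation applied only to atoms), ∧, ∨. -/
inductive Fml where
  | pos : ℕ → Fml
  | neg : ℕ → Fml
  | and : Fml → Fml → Fml
  | or : Fml → Fml → Fml
deriving DecidableEq

namespace Fml

/-- Negation (pushed to atoms, as ¬ applies only to atoms). -/
def negate : Fml → Fml
  | pos n => neg n
  | neg n => pos n
  | and a b => or a.negate b.negate
  | or a b => and a.negate b.negate

/-- Substitution extended homomorphically. -/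
def subst (σ : ℕ → Fml) : Fml → Fml
  | pos n => σ n
  | neg n => (σ n).negate
  | and a b => and (a.subst σ) (b.subst σ)
  | or a b => or (a.subst σ) (b.subst σ)

/-- Classical evaluation under a truth assignment. -/
def eval (v : ℕ → Bool) : Fml → Bool
  | pos n => v n
  | neg n => !(v n)
  | and a b => a.eval v && b.eval v
  | or a b => a.eval v || b.eval v

/-- Number of positive occurrences of atom `a`. -/
def cPos (a : ℕ) : Fml → ℕ
  | pos n => if n = a then 1 else 0
  | neg _ => 0
  | and f g => f.cPos a + g.cPos a
  | or f g => f.cPos a + g.cPos a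

/-- Number of negative occurrences of atom `a`. -/
def cNeg (a : ℕ) : Fml → ℕ
  | pos _ => 0
  | neg n => if n = a then 1 else 0
  | and f g => f.cNeg a + g.cNeg a
  | or f g => f.cNeg a + g.cNeg a

/-- Total number of positive occurrences of atoms. -/
def posOcc : Fml → ℕ
  | pos _ => 1
  | neg _ => 0
  | and f g => f.posOcc + g.posOcc
  | or f g => f.posOcc + g.posOcc

/-- Length: total number of occurrences of literals and connectives. -/
def len : Fml → ℕ
  | pos _ => 1
  | neg _ => 1
  | and f g => f.len + g.len + 1
  | or f g => f.len + g.len + 1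

/-- Number of occurrences of ∧. -/
def nAnd : Fml → ℕ
  | pos _ => 0
  | neg _ => 0
  | and f g => f.nAnd + g.nAnd + 1
  | or f g => f.nAnd + g.nAnd

/-- Number of occurrences of ∨. -/
def nOr : Fml → ℕ
  | pos _ => 0
  | neg _ => 0
  | and f g => f.nOr + g.nOr
  | or f g => f.nOr + g.nOr + 1

end Fml

def Tautology (A : Fml) : Prop := ∀ v, A.eval v = true

/-- No atom has more than two occurrences. -/
def Binary (A : Fml) : Prop := ∀ a, A.cPos a + A.cNeg a ≤ 2

/-- Whenever an atom occurs twice, one occurrence is positive and one negative. -/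
def Normal (A : Fml) : Prop := ∀ a, A.cPos a ≤ 1 ∧ A.cNeg a ≤ 1

def AtomicLevel (σ : ℕ → Fml) : Prop := ∀ n, ∃ m, σ n = Fml.pos m

/-- `F` is an instance of `B`: σ(B) = F for some substitution σ. -/
def InstanceOf (F B : Fml) : Prop := ∃ σ, B.subst σ = F

/-- `F` is an atomic-level instance of `B`. -/
def AtomicInstanceOf (F B : Fml) : Prop := ∃ σ, AtomicLevel σ ∧ B.subst σ = F

/-- A cirquent: a pool of (occurrences of) formulas, and a list of ogroups,
each an (index-)set of oformulas of the pool. -/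
structure Cirquent where
  pool : List Fml
  groups : List (Finset ℕ)

def emptyCirquent : Cirquent := ⟨[], []⟩

def idCirquent (F : Fml) : Cirquent := ⟨[F.negate, F], [{0, 1}]⟩

/-- The cirquent with pool ⟨F⟩ and one ogroup containing F. -/
def fmlCirquent (F : Fml) : Cirquent := ⟨[F], [{0}]⟩

/-- Index renaming swapping `i` and `i+1`. -/
def swapIdx (i : ℕ) : ℕ → ℕ := fun j => if j = i then i + 1 else if j = i + 1 then i else j

/-- Index renaming when a new oformula is inserted at position `i`. -/
def insShift (i : ℕ) : ℕ → ℕ := fun j => if j < i then j else j + 1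

/-- Index renaming when the oformulas at positions `i`, `i+1` are merged into one at `i`. -/
def mergeIdx (i : ℕ) : ℕ → ℕ := fun j => if j ≤ i then j else j - 1

/-- Mix: placing the two premise cirquents side by side. -/
def MixStep (A B C : Cirquent) : Prop :=
  C.pool = A.pool ++ B.pool ∧
  C.groups = A.groups ++ B.groups.map (Finset.image (· + A.pool.length))

/-- Oformula exchange: swap two adjacent oformulas, preserving containment. -/
def OfExchStep (P C : Cirquent) : Prop :=
  ∃ (l₁ l₂ : List Fml) (F G : Fml),
    P.pool = l₁ ++ F :: G :: l₂ ∧ C.pool = l₁ ++ G :: F :: l₂ ∧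
    C.groups = P.groups.map (Finset.image (swapIdx l₁.length))

/-- Ogroup exchange: swap two adjacent ogroups. -/
def OgExchStep (P C : Cirquent) : Prop :=
  C.pool = P.pool ∧
  ∃ (g₁ g₂ : List (Finset ℕ)) (Γ Δ : Finset ℕ),
    P.groups = g₁ ++ Γ :: Δ :: g₂ ∧ C.groups = g₁ ++ Δ :: Γ :: g₂

/-- Pool weakening: insert a new oformula, contained in no ogroup. -/
def PoolWeakStep (P C : Cirquent) : Prop :=
  ∃ (l₁ l₂ : List Fml) (F : Fml),
    P.pool = l₁ ++ l₂ ∧ C.pool = l₁ ++ F :: l₂ ∧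
    C.groups = P.groups.map (Finset.image (insShift l₁.length))

/-- Ogroup weakening: add a new arc between a pre-existing ogroup and oformula. -/
def OgWeakStep (P C : Cirquent) : Prop :=
  C.pool = P.pool ∧
  ∃ (g₁ g₂ : List (Finset ℕ)) (Γ : Finset ℕ) (j : ℕ),
    j < P.pool.length ∧ j ∉ Γ ∧
    P.groups = g₁ ++ Γ :: g₂ ∧ C.groups = g₁ ++ insert j Γ :: g₂

/-- Downward duplication: replace an ogroup by two adjacent copies of it. -/
def DupDownStep (P C : Cirquent) : Prop :=
  C.pool = P.pool ∧
  ∃ (g₁ g₂ : List (Finset ℕ)) (Γ : Finset ℕ),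
    P.groups = g₁ ++ Γ :: g₂ ∧ C.groups = g₁ ++ Γ :: Γ :: g₂

/-- Upward duplication: the converse of downward duplication. -/
def DupUpStep (P C : Cirquent) : Prop :=
  C.pool = P.pool ∧
  ∃ (g₁ g₂ : List (Finset ℕ)) (Γ : Finset ℕ),
    P.groups = g₁ ++ Γ :: Γ :: g₂ ∧ C.groups = g₁ ++ Γ :: g₂

/-- ∨-introduction: merge two adjacent oformulas F, G into F ∨ G. -/
def OrIntroStep (P C : Cirquent) : Prop :=
  ∃ (l₁ l₂ : List Fml) (F G : Fml),
    P.pool = l₁ ++ F :: G :: l₂ ∧ C.pool = l₁ ++ (Fml.or F G) :: l₂ ∧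
    C.groups = P.groups.map (Finset.image (mergeIdx l₁.length))

/-- The merging of the ogroup list in ∧-introduction: no ogroup contains both `i`
and `i+1`; every ogroup containing `i` is immediately followed by one containing
`i+1` and vice versa; such pairs are merged. -/
inductive AndMerge (i : ℕ) : List (Finset ℕ) → List (Finset ℕ) → Prop where
  | nil : AndMerge i [] []
  | skip {Γ : Finset ℕ} {l l' : List (Finset ℕ)} :
      i ∉ Γ → (i + 1) ∉ Γ → AndMerge i l l' → AndMerge i (Γ :: l) (Γ :: l')
  | merge {Γ Δ : Finset ℕ} {l l' : List (Finset ℕ)} :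
      i ∈ Γ → (i + 1) ∉ Γ → (i + 1) ∈ Δ → i ∉ Δ →
      AndMerge i l l' → AndMerge i (Γ :: Δ :: l) ((Γ ∪ Δ) :: l')

/-- ∧-introduction. -/
def AndIntroStep (P C : Cirquent) : Prop :=
  ∃ (l₁ l₂ : List Fml) (F G : Fml) (merged : List (Finset ℕ)),
    P.pool = l₁ ++ F :: G :: l₂ ∧ C.pool = l₁ ++ (Fml.and F G) :: l₂ ∧
    AndMerge l₁.length P.groups merged ∧
    C.groups = merged.map (Finset.image (mergeIdx l₁.length))

inductive RuleName where
  | emptyAx | idAx | mix | ofExch | ogExch | poolWeak | ogWeak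
  | dupDown | dupUp | orIntro | andIntro
deriving DecidableEq

/-- The unary (one-premise) rules, by name. -/
def unRel : RuleName → Cirquent → Cirquent → Prop
  | .ofExch => OfExchStep
  | .ogExch => OgExchStep
  | .poolWeak => PoolWeakStep
  | .ogWeak => OgWeakStep
  | .dupDown => DupDownStep
  | .dupUp => DupUpStep
  | .orIntro => OrIntroStep
  | .andIntro => AndIntroStep
  | _ => fun _ _ => False

/-- Proof trees: each node is labeled by its cirquent and the rule used. -/
inductive PTree where
  | leaf (C : Cirquent) (r : RuleName)
  | un (C : Cirquent) (r : RuleName) (p : PTree)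
  | bin (C : Cirquent) (r : RuleName) (p q : PTree)

namespace PTree

def concl : PTree → Cirquent
  | leaf C _ => C
  | un C _ _ => C
  | bin C _ _ _ => C

/-- Validity: each node follows from its children by the named rule. -/
def Valid : PTree → Prop
  | leaf C r =>
      (r = .emptyAx ∧ C = emptyCirquent) ∨ (r = .idAx ∧ ∃ F, C = idCirquent F)
  | un C r p => p.Valid ∧ unRel r p.concl C
  | bin C r p q => p.Valid ∧ q.Valid ∧ r = .mix ∧ MixStep p.concl q.concl C

/-- Number of applications of rule `r` in the proof. -/
def count (r : RuleName) : PTree → ℕ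
  | leaf _ r' => if r' = r then 1 else 0
  | un _ r' p => (if r' = r then 1 else 0) + p.count r
  | bin _ r' p q => (if r' = r then 1 else 0) + p.count r + q.count r

/-- The cirquents occurring in the proof. -/
def cirquents : PTree → List Cirquent
  | leaf C _ => [C]
  | un C _ p => C :: p.cirquents
  | bin C _ p q => C :: (p.cirquents ++ q.cirquents)

/-- Total number of rule applications (nodes). -/
def nodes : PTree → ℕ
  | leaf _ _ => 1
  | un _ _ p => p.nodes + 1
  | bin _ _ p q => p.nodes + q.nodes + 1

/-- Number of leaves of the proof tree. -/
def leavesCount : PTree → ℕ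
  | leaf _ _ => 1
  | un _ _ p => p.leavesCount
  | bin _ _ p q => p.leavesCount + q.leavesCount

end PTree

/-- A proof uses no duplication. -/
def DupFree (p : PTree) : Prop :=
  p.count RuleName.dupDown = 0 ∧ p.count RuleName.dupUp = 0

/-- Provability of a cirquent in CL5. -/
def ProvesC (C : Cirquent) : Prop := ∃ p : PTree, p.Valid ∧ p.concl = C

/-- Provability of a formula in CL5. -/
def ProvesCL5 (F : Fml) : Prop := ∃ p : PTree, p.Valid ∧ p.concl = fmlCirquent F

/-- Provability of a formula in CL5⁻ (CL5 without duplication). -/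
def ProvesCL5m (F : Fml) : Prop :=
  ∃ p : PTree, p.Valid ∧ DupFree p ∧ p.concl = fmlCirquent F

/-- Number of arcs of a cirquent (sum of the sizes of its ogroups). -/
def Cirquent.arcs (C : Cirquent) : ℕ := (C.groups.map Finset.card).sum

/-- Size of a cirquent: sum of the lengths of the oformulas in its pool plus
the sum of the sizes of its ogroups. -/
def Cirquent.size (C : Cirquent) : ℕ := (C.pool.map Fml.len).sum + C.arcs

/-- Size of a proof: the sum of the sizes of the cirquents it contains. -/
def PTree.size (p : PTree) : ℕ := (p.cirquents.map Cirquent.size).sum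

/-- Total number of positive occurrences of atoms in the pool. -/
def Cirquent.poolPosOcc (C : Cirquent) : ℕ := (C.pool.map Fml.posOcc).sum

end CirquentCalc

open CirquentCalc

lemma aux_posOcc_negate (F : Fml) : 1 ≤ F.posOcc + F.negate.posOcc := by
  induction F with
  | pos n => simp [Fml.posOcc, Fml.negate]
  | neg n => simp [Fml.posOcc, Fml.negate]
  | and a b iha ihb => simp only [Fml.posOcc, Fml.negate] at *; omega
  | or a b iha ihb => simp only [Fml.posOcc, Fml.negate] at *; omega

lemma aux_andMerge_len {i : ℕ} {l l' : List (Finset ℕ)} (h : AndMerge i l l') :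
    l'.length ≤ l.length := by
  induction h with
  | nil => simp
  | skip _ _ _ ih => simp only [List.length_cons]; omega
  | merge _ _ _ _ _ ih => simp only [List.length_cons]; omega

lemma aux_un_step {r : RuleName} {P C : Cirquent} (hr : r ≠ .dupDown)
    (h : unRel r P C) :
    P.poolPosOcc ≤ C.poolPosOcc ∧ C.groups.length ≤ P.groups.length := by
  cases r with
  | ofExch =>
    obtain ⟨l₁, l₂, F, G, hP, hC, hg⟩ := h
    constructor
    · simp [Cirquent.poolPosOcc, hP, hC]; omega
    · simp [hg]
  | ogExch =>
    obtain ⟨hp, g₁, g₂, Γ, Δ, hP, hC⟩ := h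
    constructor
    · simp [Cirquent.poolPosOcc, hp]
    · simp [hP, hC]
  | poolWeak =>
    obtain ⟨l₁, l₂, F, hP, hC, hg⟩ := h
    constructor
    · simp [Cirquent.poolPosOcc, hP, hC]
    · simp [hg]
  | ogWeak =>
    obtain ⟨hp, g₁, g₂, Γ, j, _, _, hP, hC⟩ := h
    constructor
    · simp [Cirquent.poolPosOcc, hp]
    · simp [hP, hC]
  | dupDown => exact absurd rfl hr
  | dupUp =>
    obtain ⟨hp, g₁, g₂, Γ, hP, hC⟩ := h
    constructor
    · simp [Cirquent.poolPosOcc, hp]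
    · simp [hP, hC]
  | orIntro =>
    obtain ⟨l₁, l₂, F, G, hP, hC, hg⟩ := h
    constructor
    · simp [Cirquent.poolPosOcc, hP, hC, Fml.posOcc]; omega
    · simp [hg]
  | andIntro =>
    obtain ⟨l₁, l₂, F, G, merged, hP, hC, hm, hg⟩ := h
    constructor
    · simp [Cirquent.poolPosOcc, hP, hC, Fml.posOcc]; omega
    · simp only [hg, List.length_map]
      exact aux_andMerge_len hm
  | emptyAx => exact absurd h not_false
  | idAx => exact absurd h not_false
  | mix => exact absurd h not_false

lemma aux_concl_mem (p : PTree) : p.concl ∈ p.cirquents := by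
  cases p <;> simp [PTree.concl, PTree.cirquents]

lemma aux_main (p : PTree) (hv : p.Valid) (hd : p.count .dupDown = 0) :
    ∀ C ∈ p.cirquents, C.groups.length ≤ p.concl.poolPosOcc := by
  induction p with
  | leaf C r =>
    intro D hD
    simp only [PTree.cirquents, List.mem_singleton] at hD
    subst hD
    rcases hv with ⟨_, hC⟩ | ⟨_, F, hC⟩ <;> subst hC
    · simp [emptyCirquent, Cirquent.poolPosOcc, PTree.concl]
    · simp only [idCirquent, Cirquent.poolPosOcc, PTree.concl, List.map_cons,
        List.map_nil, List.sum_cons, List.sum_nil, List.length_singleton]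
      have := aux_posOcc_negate F
      omega
  | un C r q ih =>
    obtain ⟨hvq, hrel⟩ := hv
    simp only [PTree.count] at hd
    have hr : r ≠ .dupDown := by
      intro h; subst h; simp at hd
    have hdq : q.count .dupDown = 0 := by
      split at hd <;> omega
    obtain ⟨hmono, hlen⟩ := aux_un_step hr hrel
    intro D hD
    simp only [PTree.cirquents, List.mem_cons] at hD
    rcases hD with rfl | hD
    · calc D.groups.length ≤ q.concl.groups.length := hlen
        _ ≤ q.concl.poolPosOcc := ih hvq hdq _ (aux_concl_mem q)
        _ ≤ (PTree.un D r q).concl.poolPosOcc := hmono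
    · calc D.groups.length ≤ q.concl.poolPosOcc := ih hvq hdq _ hD
        _ ≤ (PTree.un C r q).concl.poolPosOcc := hmono
  | bin C r q₁ q₂ ih₁ ih₂ =>
    obtain ⟨hv₁, hv₂, hrm, hrel⟩ := hv
    simp only [PTree.count] at hd
    have hd₁ : q₁.count .dupDown = 0 := by split at hd <;> omega
    have hd₂ : q₂.count .dupDown = 0 := by split at hd <;> omega
    obtain ⟨hpool, hgroups⟩ := hrel
    have hC : C.poolPosOcc = q₁.concl.poolPosOcc + q₂.concl.poolPosOcc := by
      simp [Cirquent.poolPosOcc, hpool]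
    intro D hD
    simp only [PTree.cirquents, List.mem_cons, List.mem_append] at hD
    rcases hD with rfl | hD | hD
    · have : D.groups.length = q₁.concl.groups.length + q₂.concl.groups.length := by
        simp [hgroups]
      have h1 := ih₁ hv₁ hd₁ _ (aux_concl_mem q₁)
      have h2 := ih₂ hv₂ hd₂ _ (aux_concl_mem q₂)
      simp only [PTree.concl]
      omega
    · have := ih₁ hv₁ hd₁ _ hD
      simp only [PTree.concl]
      omega
    · have := ih₂ hv₂ hd₂ _ hD
      simp only [PTree.concl]
      omega

/-- If F is provable in CL5⁻ and has n positive occurrences of atoms,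
then no CL5⁻ proof of F contains a cirquent with more than n ogroups. -/
theorem cl5m_ogroup_bound (F : Fml) (n : ℕ) (hn : n = F.posOcc) (hF : ProvesCL5m F)
    (p : PTree) (hv : p.Valid) (hd : DupFree p) (hc : p.concl = fmlCirquent F) :
    ∀ C ∈ p.cirquents, C.groups.length ≤ n := by
  intro C hC
  have h := aux_main p hv hd.1 C hC
  rw [hc] at h
  simpa [fmlCirquent, Cirquent.poolPosOcc, hn] using h
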